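/- Let {W_i}_{i=1}^M be subspaces of a finite-dimensional real inner product space H such that {W_i}_{i=1}^M does phase retrieval. Then the family of orthogonal complements {W_i^⊥}_{i=1}^M does phase retrieval if and only if {W_i^⊥}_{i=1}^M does norm retrieval. -/

import Mathlib

open scoped RealInnerProductSpace

noncomputable section

/-- Phase retrieval for a family of subspaces of a finite-dimensional real inner product
space. -/
def DoesPhaseRetrieval {H : Type*} [NormedAddCommGroup H] [InnerProductSpace ℝ H]
    [FiniteDimensional ℝ H] {ι : Type*} (W : ι → Submodule ℝ H) : Prop :=
  ∀ x y : H, (∀ i : ι, ‖Submodule.orthogonalProjectionOnto (W i) x‖ = ‖Submodule.orthogonalProjectionOnto (W i) y‖) →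
    x = y ∨ x = -y

/-- Norm retrieval for a family of subspaces of a finite-dimensional real inner product
space. -/
def DoesNormRetrieval {H : Type*} [NormedAddCommGroup H] [InnerProductSpace ℝ H]
    [FiniteDimensional ℝ H] {ι : Type*} (W : ι → Submodule ℝ H) : Prop :=
  ∀ x y : H, (∀ i : ι, ‖Submodule.orthogonalProjectionOnto (W i) x‖ = ‖Submodule.orthogonalProjectionOnto (W i) y‖) →
    ‖x‖ = ‖y‖

/-- If `{W_i}_{i=1}^M` does phase retrieval, then `{W_i^⊥}_{i=1}^M` does phase retrieval
if and only if `{W_i^⊥}_{i=1}^M` does norm retrieval. -/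
theorem stmt_11 {H : Type*} [NormedAddCommGroup H] [InnerProductSpace ℝ H]
    [FiniteDimensional ℝ H] {M : ℕ}
    (W : Fin M → Submodule ℝ H) (hW : DoesPhaseRetrieval W) :
    DoesPhaseRetrieval (fun i => (W i)ᗮ) ↔ DoesNormRetrieval (fun i => (W i)ᗮ) := by
  constructor
  · intro h x y hxy
    rcases h x y hxy with rfl | rfl
    · rfl
    · simp
  · intro h x y hxy
    have hnorm : ‖x‖ = ‖y‖ := h x y hxy
    apply hW
    intro i
    have hx := Submodule.norm_sq_eq_add_norm_sq_projection x (W i)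
    have hy := Submodule.norm_sq_eq_add_norm_sq_projection y (W i)
    have h1 : ‖Submodule.orthogonalProjectionOnto (W i) x‖ ^ 2 = ‖Submodule.orthogonalProjectionOnto (W i) y‖ ^ 2 := by
      have h2 := hxy i
      simp only at h2
      rw [hnorm, h2] at hx
      linarith
    exact (sq_eq_sq₀ (norm_nonneg _) (norm_nonneg _)).mp h1
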